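/- arXiv:1603.02185 — 3 statements merged into one kernel-verified Lean document; each statement's English description precedes it below -/
import Mathlib

section
/- Let x > 0 and let ε_0, ε_1, ε_2, … be a sequence of nonnegative reals such that ε_{t+1} ≤ ε_t − x·ε_t² for all t. Then for any ε > 0 and any positive integer t with t ≥ ⌈1/(x·ε)⌉, we have ε_t ≤ ε. -/
/-- Recursion lemma (Lemma B.2 of Shalev-Shwartz, Srebro, Zhang 2010): if
`ε_{t+1} ≤ ε_t − x·ε_t²` for a nonnegative sequence and `x > 0`, then
`ε_t ≤ ε` for every positive integer `t ≥ ⌈1/(x·ε)⌉`. -/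
theorem recursion_lemma (x : ℝ) (hx : 0 < x) (e : ℕ → ℝ)
    (hnonneg : ∀ t, 0 ≤ e t)
    (hrec : ∀ t, e (t + 1) ≤ e t - x * (e t) ^ 2) :
    ∀ ε : ℝ, 0 < ε → ∀ t : ℕ, 0 < t → (⌈1 / (x * ε)⌉₊ : ℕ) ≤ t → e t ≤ ε := by
  have key : ∀ s : ℕ, e (s + 1) ≤ 1 / (x * (s + 2)) := by
    intro s
    induction s with
    | zero =>
      have h := hrec 0
      have h0 := hnonneg 0
      rw [le_div_iff₀ (by positivity)]
      push_cast
      nlinarith [sq_nonneg (2 * x * e 0 - 1)]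
    | succ t ih =>
      have h := hrec (t + 1)
      have h0 := hnonneg (t + 1)
      set a := e (t + 1) with ha
      have hpos : (0:ℝ) < x * ((t:ℝ) + 2) := by positivity
      have hc : a * (x * ((t:ℝ) + 2)) ≤ 1 := by
        rw [← le_div_iff₀ hpos]; exact_mod_cast ih
      rw [le_div_iff₀ (by positivity)]
      push_cast
      have hxa : 0 ≤ x * a := mul_nonneg hx.le h0
      have hxa1 : x * a ≤ 1 := by nlinarith
      nlinarith [mul_nonneg (by nlinarith : (0:ℝ) ≤ 1 - a * (x * ((t:ℝ) + 2)))
          (by linarith : (0:ℝ) ≤ 1 - x * a),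
        sq_nonneg (x * a),
        mul_le_mul_of_nonneg_right h (by positivity : (0:ℝ) ≤ x * ((t:ℝ) + 3))]
  intro ε hε t ht hceil
  obtain ⟨s, rfl⟩ : ∃ s, t = s + 1 := ⟨t - 1, (Nat.succ_pred_eq_of_pos ht).symm⟩
  have htr : 1 / (x * ε) ≤ ((s:ℝ) + 1) := by
    have := Nat.ceil_le.mp hceil
    exact_mod_cast this
  have h1 : e (s + 1) ≤ 1 / (x * ((s:ℝ) + 2)) := key s
  have h2 : 1 / (x * ((s:ℝ) + 2)) ≤ ε := by
    rw [div_le_iff₀ (by positivity)]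
    have : 1 ≤ x * ε * ((s:ℝ) + 1) := by
      rw [div_le_iff₀ (by positivity)] at htr
      linarith [htr]
    nlinarith [mul_pos hx hε]
  linarith
end

section
/- Let X = U·Σ·Vᵀ be a singular value decomposition of X ∈ ℝ^{p×m} and let λ > 0. Then the matrix W = U·(Σ − (λ/2)·I)_+·Vᵀ, where (x)_+ = max(x, 0) is applied entrywise to the diagonal, is the unique minimizer of W ↦ ‖W − X‖_F² + λ·‖W‖_* over all p×m matrices. -/
open Matrix

/-- Frobenius norm squared. -/
noncomputable def frobNormSq {p m : ℕ} (A : Matrix (Fin p) (Fin m) ℝ) : ℝ :=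
  ∑ i, ∑ j, (A i j) ^ 2

/-- Nuclear norm: sum of singular values. -/
noncomputable def nuclearNorm {p m : ℕ} (A : Matrix (Fin p) (Fin m) ℝ) : ℝ :=
  ∑ i, Real.sqrt ((Matrix.isHermitian_conjTranspose_mul_self A).eigenvalues i)

section Aux

open scoped MatrixOrder in
/-- Port helper: the square root of a positive semidefinite real matrix (via the CFC). -/
noncomputable def Matrix.PosSemidef.sqrt {n : Type*} [Fintype n] [DecidableEq n]
    {A : Matrix n n ℝ} (_hA : A.PosSemidef) : Matrix n n ℝ :=
  CFC.sqrt A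

open scoped MatrixOrder in
lemma Matrix.PosSemidef.posSemidef_sqrt {n : Type*} [Fintype n] [DecidableEq n]
    {A : Matrix n n ℝ} (hA : A.PosSemidef) : hA.sqrt.PosSemidef :=
  nonneg_iff_posSemidef.mp (CFC.sqrt_nonneg A)

open scoped MatrixOrder in
lemma Matrix.PosSemidef.sqrt_mul_self {n : Type*} [Fintype n] [DecidableEq n]
    {A : Matrix n n ℝ} (hA : A.PosSemidef) : hA.sqrt * hA.sqrt = A :=
  CFC.sqrt_mul_sqrt_self A (nonneg_iff_posSemidef.mpr hA)

open scoped MatrixOrder in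
lemma Matrix.PosSemidef.eq_sqrt_of_sq_eq {n : Type*} [Fintype n] [DecidableEq n]
    {B A : Matrix n n ℝ} (hB : B.PosSemidef) (hA : A.PosSemidef) (h : B ^ 2 = A) :
    B = hA.sqrt :=
  ((CFC.sqrt_eq_iff A B (nonneg_iff_posSemidef.mpr hA) (nonneg_iff_posSemidef.mpr hB)).mpr
    (by rw [← sq]; exact h)).symm

lemma finSumIte {n : ℕ} (c : ℕ) (g : Fin n → ℝ) :
    ∑ k : Fin n, (if (k : ℕ) = c then g k else 0) =
      if h : c < n then g ⟨c, h⟩ else 0 := by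
  by_cases h : c < n
  · rw [dif_pos h, Finset.sum_eq_single ⟨c, h⟩]
    · simp
    · intro b _ hb
      rw [if_neg]
      simpa [Fin.ext_iff] using hb
    · simp
  · rw [dif_neg h, Finset.sum_eq_zero]
    intro k _
    rw [if_neg]
    omega

lemma finSumIte' {n : ℕ} (c : ℕ) (g : Fin n → ℝ) :
    ∑ k : Fin n, (if c = (k : ℕ) then g k else 0) =
      if h : c < n then g ⟨c, h⟩ else 0 := by
  rw [← finSumIte c g]
  congr 1
  funext k
  by_cases h : c = (k : ℕ)
  · rw [if_pos h, if_pos h.symm]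
  · rw [if_neg h, if_neg (Ne.symm h)]

lemma diag_double_sum {p m : ℕ} (f : Fin p → Fin m → ℝ) :
    ∑ i : Fin p, ∑ j : Fin m, (if (i : ℕ) = (j : ℕ) then f i j else 0) =
      ∑ j : Fin m, (if h : (j : ℕ) < p then f ⟨j, h⟩ j else 0) := by
  rw [Finset.sum_comm]
  exact Finset.sum_congr rfl fun j _ => finSumIte (j : ℕ) (fun i => f i j)

open scoped MatrixOrder in
lemma trace_sqrt {n : Type*} [Fintype n] [DecidableEq n] {H : Matrix n n ℝ} (hH : PosSemidef H) :
    hH.sqrt.trace = ∑ i, Real.sqrt (hH.1.eigenvalues i) := by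
  rw [PosSemidef.sqrt, CFC.sqrt_eq_cfc, cfc_nnreal_eq_real _ H, hH.1.cfc_eq, IsHermitian.cfc,
    Unitary.conjStarAlgAut_apply, Matrix.trace_mul_cycle, Unitary.coe_star_mul_self, one_mul,
    trace_diagonal]
  simp [hH.eigenvalues_nonneg]

lemma nuclearNorm_eq_trace {p m : ℕ} (A : Matrix (Fin p) (Fin m) ℝ) :
    nuclearNorm A = (posSemidef_conjTranspose_mul_self A).sqrt.trace := by
  rw [trace_sqrt, nuclearNorm]

lemma conj_transpose_mul {p m : ℕ} (A : Matrix (Fin p) (Fin m) ℝ)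
    (U : Matrix (Fin p) (Fin p) ℝ) (V : Matrix (Fin m) (Fin m) ℝ)
    (hU : Uᵀ * U = 1) :
    (U * A * Vᵀ)ᵀ * (U * A * Vᵀ) = V * (Aᵀ * A) * Vᵀ := by
  simp only [transpose_mul, transpose_transpose, Matrix.mul_assoc]
  rw [← Matrix.mul_assoc Uᵀ U, hU, Matrix.one_mul]

lemma nuclearNorm_conj {p m : ℕ} (A : Matrix (Fin p) (Fin m) ℝ)
    (U : Matrix (Fin p) (Fin p) ℝ) (V : Matrix (Fin m) (Fin m) ℝ)
    (hU : Uᵀ * U = 1) (hV : Vᵀ * V = 1) :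
    nuclearNorm (U * A * Vᵀ) = nuclearNorm A := by
  have hA : PosSemidef (Aᴴ * A) := posSemidef_conjTranspose_mul_self A
  have hM : PosSemidef ((U * A * Vᵀ)ᴴ * (U * A * Vᵀ)) := posSemidef_conjTranspose_mul_self _
  have hMM : (U * A * Vᵀ)ᴴ * (U * A * Vᵀ) = V * (Aᴴ * A) * Vᵀ := by
    rw [conjTranspose_eq_transpose_of_trivial, conjTranspose_eq_transpose_of_trivial]
    exact conj_transpose_mul A U V hU
  have h1 : PosSemidef (V * hA.sqrt * Vᵀ) := by
    have := hA.posSemidef_sqrt.mul_mul_conjTranspose_same V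
    simpa only [conjTranspose_eq_transpose_of_trivial] using this
  have h2 : (V * hA.sqrt * Vᵀ) ^ 2 = (U * A * Vᵀ)ᴴ * (U * A * Vᵀ) := by
    rw [hMM, pow_two]
    simp only [Matrix.mul_assoc]
    rw [← Matrix.mul_assoc Vᵀ V, hV, Matrix.one_mul, ← Matrix.mul_assoc hA.sqrt,
      hA.sqrt_mul_self, Matrix.mul_assoc]
  have hs : hM.sqrt = V * hA.sqrt * Vᵀ := (h1.eq_sqrt_of_sq_eq hM h2).symm
  rw [nuclearNorm_eq_trace, nuclearNorm_eq_trace, hs, Matrix.trace_mul_cycle, hV, one_mul]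

lemma frobNormSq_eq_trace {p m : ℕ} (A : Matrix (Fin p) (Fin m) ℝ) :
    frobNormSq A = (Aᵀ * A).trace := by
  rw [frobNormSq, Matrix.trace]
  rw [Finset.sum_comm]
  congr 1
  funext j
  simp [Matrix.mul_apply, diag, sq, transpose_apply]

lemma frobNormSq_conj {p m : ℕ} (A : Matrix (Fin p) (Fin m) ℝ)
    (U : Matrix (Fin p) (Fin p) ℝ) (V : Matrix (Fin m) (Fin m) ℝ)
    (hU : Uᵀ * U = 1) (hV : Vᵀ * V = 1) :
    frobNormSq (U * A * Vᵀ) = frobNormSq A := by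
  rw [frobNormSq_eq_trace, frobNormSq_eq_trace, conj_transpose_mul A U V hU,
    Matrix.trace_mul_cycle, hV, one_mul]

lemma nuclear_dual {p m : ℕ} (Z : Matrix (Fin p) (Fin m) ℝ) (c : Fin p → ℝ)
    (hc : ∀ i, |c i| ≤ 1) :
    ∑ j : Fin m, (if h : (j : ℕ) < p then c ⟨j, h⟩ * Z ⟨j, h⟩ j else 0) ≤ nuclearNorm Z := by
  classical
  set hH := Matrix.isHermitian_conjTranspose_mul_self Z with hHdef
  set B : Matrix (Fin m) (Fin m) ℝ := (hH.eigenvectorUnitary : Matrix (Fin m) (Fin m) ℝ) with hBdef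
  have hBtB : Bᵀ * B = 1 := by
    have := Unitary.coe_star_mul_self hH.eigenvectorUnitary
    rwa [Matrix.star_eq_conjTranspose, conjTranspose_eq_transpose_of_trivial] at this
  have hBBt : B * Bᵀ = 1 := mul_eq_one_comm.mp hBtB
  have hdiagZ : Bᵀ * (Zᴴ * Z) * B = diagonal hH.eigenvalues := by
    have := hH.conjStarAlgAut_star_eigenvectorUnitary
    rw [Unitary.conjStarAlgAut_apply, Unitary.coe_star, star_star] at this
    rwa [Matrix.star_eq_conjTranspose, conjTranspose_eq_transpose_of_trivial,
      RCLike.ofReal_real_eq_id, Function.id_comp] at this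
  set C : Matrix (Fin p) (Fin m) ℝ :=
    Matrix.of (fun i j => if (i : ℕ) = (j : ℕ) then c i else 0) with hCdef
  set P := C * B with hPdef
  set Q := Z * B with hQdef
  have hQcol : ∀ j, ∑ i, (Q i j) ^ 2 = hH.eigenvalues j := by
    intro j
    have h1 : (Qᵀ * Q) j j = hH.eigenvalues j := by
      have : Qᵀ * Q = diagonal hH.eigenvalues := by
        rw [hQdef, transpose_mul, ← hdiagZ, conjTranspose_eq_transpose_of_trivial]
        simp only [Matrix.mul_assoc]
      rw [this, diagonal_apply_eq]
    rw [← h1, Matrix.mul_apply]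
    congr 1
    funext i
    rw [transpose_apply, sq]
  have hPentry : ∀ i j, P i j = if h : (i : ℕ) < m then c i * B ⟨i, h⟩ j else 0 := by
    intro i j
    rw [hPdef, Matrix.mul_apply]
    rw [Finset.sum_congr rfl fun k _ =>
      show C i k * B k j = (if (i : ℕ) = (k : ℕ) then c i * B k j else 0) by
        by_cases h : (i : ℕ) = (k : ℕ) <;> simp [hCdef, h]]
    exact finSumIte' (i : ℕ) (fun k => c i * B k j)
  have hPcol : ∀ j, ∑ i, (P i j) ^ 2 ≤ 1 := by
    intro j
    have step1 : ∑ i, (P i j) ^ 2 ≤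
        ∑ i : Fin p, (if h : (i : ℕ) < m then (B ⟨i, h⟩ j) ^ 2 else 0) := by
      apply Finset.sum_le_sum
      intro i _
      rw [hPentry i j]
      by_cases h : (i : ℕ) < m
      · rw [dif_pos h, dif_pos h, mul_pow]
        have hci : c i ^ 2 ≤ 1 := by
          have := hc i
          nlinarith [abs_nonneg (c i), sq_abs (c i)]
        nlinarith [sq_nonneg (B ⟨i, h⟩ j)]
      · rw [dif_neg h, dif_neg h]
        norm_num
    have step2 : ∑ i : Fin p, (if h : (i : ℕ) < m then (B ⟨i, h⟩ j) ^ 2 else 0) ≤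
        ∑ k : Fin m, (B k j) ^ 2 := by
      have e1 : ∑ i : Fin p, (if h : (i : ℕ) < m then (B ⟨i, h⟩ j) ^ 2 else 0) =
          ∑ i : Fin p, ∑ k : Fin m, (if (k : ℕ) = (i : ℕ) then (B k j) ^ 2 else 0) := by
        refine Finset.sum_congr rfl fun i _ => ?_
        rw [finSumIte (i : ℕ) (fun k => (B k j) ^ 2)]
      rw [e1, Finset.sum_comm]
      apply Finset.sum_le_sum
      intro k _
      rw [finSumIte' (k : ℕ) (fun _ : Fin p => (B k j) ^ 2)]
      by_cases h : (k : ℕ) < p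
      · rw [dif_pos h]
      · rw [dif_neg h]
        positivity
    have e2 : ∑ k : Fin m, (B k j) ^ 2 = 1 := by
      have : (Bᵀ * B) j j = 1 := by rw [hBtB, one_apply_eq]
      rw [← this, Matrix.mul_apply]
      exact Finset.sum_congr rfl fun k _ => by rw [transpose_apply, sq]
    calc ∑ i, (P i j) ^ 2 ≤ ∑ i : Fin p, (if h : (i : ℕ) < m then (B ⟨i, h⟩ j) ^ 2 else 0) := step1
      _ ≤ ∑ k : Fin m, (B k j) ^ 2 := step2
      _ = 1 := e2
  have hLHS : ∑ j : Fin m, (if h : (j : ℕ) < p then c ⟨j, h⟩ * Z ⟨j, h⟩ j else 0) =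
      (Cᵀ * Z).trace := by
    rw [Matrix.trace]
    refine Finset.sum_congr rfl fun j _ => ?_
    rw [Matrix.diag, Matrix.mul_apply]
    rw [Finset.sum_congr rfl fun i (_ : i ∈ Finset.univ) =>
      show Cᵀ j i * Z i j = (if (i : ℕ) = (j : ℕ) then c i * Z i j else 0) by
        by_cases h : (i : ℕ) = (j : ℕ) <;> simp [hCdef, h]]
    exact (finSumIte (j : ℕ) (fun i => c i * Z i j)).symm
  have htr : (Cᵀ * Z).trace = (Pᵀ * Q).trace := by
    have e : Pᵀ * Q = Bᵀ * (Cᵀ * Z) * B := by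
      rw [hPdef, hQdef, transpose_mul]
      simp only [Matrix.mul_assoc]
    rw [e, Matrix.trace_mul_cycle, ← Matrix.mul_assoc, hBBt, Matrix.one_mul]
  have hfinal : (Pᵀ * Q).trace ≤ ∑ j, Real.sqrt (hH.eigenvalues j) := by
    rw [Matrix.trace]
    apply Finset.sum_le_sum
    intro j _
    have e : (Pᵀ * Q).diag j = ∑ i, P i j * Q i j := by
      rw [Matrix.diag, Matrix.mul_apply]
      exact Finset.sum_congr rfl fun i _ => by rw [transpose_apply]
    rw [e]
    calc ∑ i, P i j * Q i j
        ≤ Real.sqrt (∑ i, (P i j) ^ 2) * Real.sqrt (∑ i, (Q i j) ^ 2) :=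
          Real.sum_mul_le_sqrt_mul_sqrt Finset.univ _ _
      _ ≤ 1 * Real.sqrt (hH.eigenvalues j) := by
          rw [hQcol j]
          apply mul_le_mul_of_nonneg_right _ (Real.sqrt_nonneg _)
          exact Real.sqrt_le_one.mpr (hPcol j)
      _ = Real.sqrt (hH.eigenvalues j) := one_mul _
  calc ∑ j : Fin m, (if h : (j : ℕ) < p then c ⟨j, h⟩ * Z ⟨j, h⟩ j else 0)
      = (Cᵀ * Z).trace := hLHS
    _ = (Pᵀ * Q).trace := htr
    _ ≤ ∑ j, Real.sqrt (hH.eigenvalues j) := hfinal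
    _ = nuclearNorm Z := rfl

lemma nuclearNorm_diag {p m : ℕ} (D : Matrix (Fin p) (Fin m) ℝ)
    (hdiag : ∀ (i : Fin p) (j : Fin m), (i : ℕ) ≠ (j : ℕ) → D i j = 0)
    (hnn : ∀ (i : Fin p) (j : Fin m), 0 ≤ D i j) :
    nuclearNorm D = ∑ j : Fin m, (if h : (j : ℕ) < p then D ⟨j, h⟩ j else 0) := by
  classical
  set d : Fin m → ℝ := fun j => ∑ i, (D i j) ^ 2 with hddef
  have hdnn : ∀ j, 0 ≤ d j := fun j => Finset.sum_nonneg fun i _ => sq_nonneg _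
  have hd : ∀ j : Fin m, d j = (if h : (j : ℕ) < p then D ⟨j, h⟩ j else 0) ^ 2 := by
    intro j
    rw [hddef]
    simp only
    rw [Finset.sum_congr rfl fun i (_ : i ∈ Finset.univ) =>
      show (D i j) ^ 2 = (if (i : ℕ) = (j : ℕ) then (D i j) ^ 2 else 0) by
        by_cases h : (i : ℕ) = (j : ℕ)
        · rw [if_pos h]
        · rw [if_neg h, hdiag i j h]; ring,
      finSumIte (j : ℕ) (fun i => (D i j) ^ 2)]
    by_cases h : (j : ℕ) < p
    · rw [dif_pos h, dif_pos h]
    · rw [dif_neg h, dif_neg h]; ring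
  have hDD : Dᴴ * D = diagonal d := by
    ext j j'
    by_cases h : j = j'
    · subst h
      rw [diagonal_apply_eq, Matrix.mul_apply, hddef]
      exact Finset.sum_congr rfl fun i _ => by
        rw [conjTranspose_apply, star_trivial, sq]
    · rw [diagonal_apply_ne _ h, Matrix.mul_apply]
      apply Finset.sum_eq_zero
      intro i _
      have : (i : ℕ) ≠ (j : ℕ) ∨ (i : ℕ) ≠ (j' : ℕ) := by
        by_contra hcon
        push_neg at hcon
        exact h (Fin.ext (hcon.1.symm.trans hcon.2))
      rcases this with h' | h'
      · rw [conjTranspose_apply, star_trivial, hdiag i j h', zero_mul]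
      · rw [hdiag i j' h', mul_zero]
  have hM : PosSemidef (Dᴴ * D) := posSemidef_conjTranspose_mul_self D
  have h1 : PosSemidef (diagonal fun j => Real.sqrt (d j)) :=
    posSemidef_diagonal_iff.mpr fun j => Real.sqrt_nonneg _
  have h2 : (diagonal fun j => Real.sqrt (d j)) ^ 2 = Dᴴ * D := by
    have e : (fun j => Real.sqrt (d j) * Real.sqrt (d j)) = d :=
      funext fun j => Real.mul_self_sqrt (hdnn j)
    rw [pow_two, diagonal_mul_diagonal, e, hDD]
  have hs : hM.sqrt = diagonal fun j => Real.sqrt (d j) := (h1.eq_sqrt_of_sq_eq hM h2).symm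
  rw [nuclearNorm_eq_trace, hs, trace_diagonal]
  refine Finset.sum_congr rfl fun j _ => ?_
  rw [hd j]
  by_cases h : (j : ℕ) < p
  · rw [dif_pos h, Real.sqrt_sq (hnn _ _)]
  · rw [dif_neg h]
    simp

lemma scalar_shrink {lam s t : ℝ} (hlam : 0 < lam) (hs : 0 ≤ s) :
    (max (s - lam / 2) 0 - s) ^ 2 + lam * max (s - lam / 2) 0 + (t - max (s - lam / 2) 0) ^ 2 ≤
      (t - s) ^ 2 + lam * |t| := by
  rcases le_total (s - lam / 2) 0 with h | h
  · rw [max_eq_right h]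
    rcases abs_cases t with ⟨ha, _⟩ | ⟨ha, _⟩ <;> nlinarith
  · rw [max_eq_left h]
    rcases abs_cases t with ⟨ha, _⟩ | ⟨ha, _⟩ <;> nlinarith

lemma diag_case {p m : ℕ} (lam : ℝ) (hlam : 0 < lam) (S : Matrix (Fin p) (Fin m) ℝ)
    (hSdiag : ∀ (i : Fin p) (j : Fin m), (i : ℕ) ≠ (j : ℕ) → S i j = 0)
    (hSnn : ∀ (i : Fin p) (j : Fin m), 0 ≤ S i j)
    (Z : Matrix (Fin p) (Fin m) ℝ) :
    frobNormSq ((Matrix.of fun i j => max (S i j - lam / 2) 0) - S) +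
        lam * nuclearNorm (Matrix.of fun i j => max (S i j - lam / 2) 0) +
        frobNormSq (Z - (Matrix.of fun i j => max (S i j - lam / 2) 0)) ≤
      frobNormSq (Z - S) + lam * nuclearNorm Z := by
  classical
  set W0 : Matrix (Fin p) (Fin m) ℝ := Matrix.of fun i j => max (S i j - lam / 2) 0 with hW0
  have hW0app : ∀ i j, W0 i j = max (S i j - lam / 2) 0 := fun i j => rfl
  have hW0diag : ∀ (i : Fin p) (j : Fin m), (i : ℕ) ≠ (j : ℕ) → W0 i j = 0 := by
    intro i j h
    rw [hW0app, hSdiag i j h]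
    rw [max_eq_right (by linarith)]
  have hW0nn : ∀ (i : Fin p) (j : Fin m), 0 ≤ W0 i j := fun i j => le_max_right _ _
  -- signs
  set c : Fin p → ℝ := fun i =>
    if hi : (i : ℕ) < m then (if 0 ≤ Z i ⟨(i : ℕ), hi⟩ then 1 else -1) else 1 with hcdef
  have hc : ∀ i, |c i| ≤ 1 := by
    intro i
    simp only [hcdef]
    by_cases hi : (i : ℕ) < m
    · rw [dif_pos hi]
      by_cases h0 : 0 ≤ Z i ⟨(i : ℕ), hi⟩
      · rw [if_pos h0, abs_one]
      · rw [if_neg h0, abs_neg, abs_one]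
    · rw [dif_neg hi, abs_one]
  have habs : ∑ j : Fin m, (if h : (j : ℕ) < p then |Z ⟨(j : ℕ), h⟩ j| else 0) ≤
      nuclearNorm Z := by
    have := nuclear_dual Z c hc
    rw [Finset.sum_congr rfl fun (j : Fin m) (_ : j ∈ Finset.univ) =>
      show (if h : (j : ℕ) < p then |Z ⟨(j : ℕ), h⟩ j| else 0)
          = (if h : (j : ℕ) < p then c ⟨(j : ℕ), h⟩ * Z ⟨(j : ℕ), h⟩ j else 0) from ?_]
    · exact this
    · by_cases h : (j : ℕ) < p
      · rw [dif_pos h, dif_pos h]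
        simp only [hcdef]
        have hjm : ((⟨(j : ℕ), h⟩ : Fin p) : ℕ) < m := j.isLt
        rw [dif_pos hjm]
        have hj : (⟨(((⟨(j : ℕ), h⟩ : Fin p)) : ℕ), hjm⟩ : Fin m) = j := Fin.ext rfl
        rw [hj]
        by_cases h0 : 0 ≤ Z ⟨(j : ℕ), h⟩ j
        · rw [if_pos h0, one_mul, abs_of_nonneg h0]
        · rw [if_neg h0, abs_of_neg (lt_of_not_ge h0)]
          ring
      · rw [dif_neg h, dif_neg h]
  -- rewrite nuclear norms as diagonal sums
  have hNW0 : nuclearNorm W0 = ∑ j : Fin m, (if h : (j : ℕ) < p then W0 ⟨j, h⟩ j else 0) :=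
    nuclearNorm_diag W0 hW0diag hW0nn
  -- termwise inequality
  have main : ∀ (i : Fin p) (j : Fin m),
      (W0 i j - S i j) ^ 2 + (if (i : ℕ) = (j : ℕ) then lam * W0 i j else 0) +
          (Z i j - W0 i j) ^ 2 ≤
        (Z i j - S i j) ^ 2 + (if (i : ℕ) = (j : ℕ) then lam * |Z i j| else 0) := by
    intro i j
    by_cases h : (i : ℕ) = (j : ℕ)
    · rw [if_pos h, if_pos h, hW0app]
      have := scalar_shrink (t := Z i j) hlam (hSnn i j)
      linarith
    · rw [if_neg h, if_neg h, hSdiag i j h, hW0diag i j h]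
      simp
  -- sum it up
  have hsum : ∑ i : Fin p, ∑ j : Fin m,
      ((W0 i j - S i j) ^ 2 + (if (i : ℕ) = (j : ℕ) then lam * W0 i j else 0) +
        (Z i j - W0 i j) ^ 2) ≤
      ∑ i : Fin p, ∑ j : Fin m,
      ((Z i j - S i j) ^ 2 + (if (i : ℕ) = (j : ℕ) then lam * |Z i j| else 0)) :=
    Finset.sum_le_sum fun i _ => Finset.sum_le_sum fun j _ => main i j
  have expand : ∀ (A B : Matrix (Fin p) (Fin m) ℝ), frobNormSq (A - B) =
      ∑ i : Fin p, ∑ j : Fin m, (A i j - B i j) ^ 2 := by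
    intro A B
    rw [frobNormSq]
    exact Finset.sum_congr rfl fun i _ => Finset.sum_congr rfl fun j _ => by
      rw [Matrix.sub_apply]
  have ediag : ∀ (g : Fin p → Fin m → ℝ),
      ∑ i : Fin p, ∑ j : Fin m, (if (i : ℕ) = (j : ℕ) then lam * g i j else 0) =
        lam * ∑ j : Fin m, (if h : (j : ℕ) < p then g ⟨j, h⟩ j else 0) := by
    intro g
    rw [diag_double_sum (fun i j => lam * g i j), Finset.mul_sum]
    refine Finset.sum_congr rfl fun j _ => ?_
    by_cases h : (j : ℕ) < p
    · rw [dif_pos h, dif_pos h]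
    · rw [dif_neg h, dif_neg h, mul_zero]
  have lhs_eq : frobNormSq (W0 - S) + lam * nuclearNorm W0 + frobNormSq (Z - W0) =
      ∑ i : Fin p, ∑ j : Fin m,
      ((W0 i j - S i j) ^ 2 + (if (i : ℕ) = (j : ℕ) then lam * W0 i j else 0) +
        (Z i j - W0 i j) ^ 2) := by
    simp only [Finset.sum_add_distrib]
    rw [expand W0 S, expand Z W0, hNW0, ediag (fun i j => W0 i j)]
  have rhs_le : ∑ i : Fin p, ∑ j : Fin m,
      ((Z i j - S i j) ^ 2 + (if (i : ℕ) = (j : ℕ) then lam * |Z i j| else 0)) ≤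
      frobNormSq (Z - S) + lam * nuclearNorm Z := by
    simp only [Finset.sum_add_distrib]
    rw [expand Z S, ediag (fun i j => |Z i j|)]
    have : lam * ∑ j : Fin m, (if h : (j : ℕ) < p then |Z ⟨(j : ℕ), h⟩ j| else 0) ≤
        lam * nuclearNorm Z := by
      exact mul_le_mul_of_nonneg_left habs (le_of_lt hlam)
    linarith
  calc frobNormSq (W0 - S) + lam * nuclearNorm W0 + frobNormSq (Z - W0)
      = _ := lhs_eq
    _ ≤ _ := hsum
    _ ≤ frobNormSq (Z - S) + lam * nuclearNorm Z := rhs_le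

end Aux

/-- Singular value shrinkage (Cai, Candès, Shen 2010): if `X = U·Σ·Vᵀ` is an SVD
(`U`, `V` orthogonal, `Σ` nonnegative and supported on the diagonal), then
`W = U·(Σ − (λ/2)·I)_+·Vᵀ` is the unique minimizer of
`W ↦ ‖W − X‖_F² + λ·‖W‖_*`. -/
theorem singular_value_shrinkage {p m : ℕ} (lam : ℝ) (hlam : 0 < lam)
    (X : Matrix (Fin p) (Fin m) ℝ)
    (U : Matrix (Fin p) (Fin p) ℝ) (V : Matrix (Fin m) (Fin m) ℝ)
    (S : Matrix (Fin p) (Fin m) ℝ)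
    (hU : Uᵀ * U = 1) (hV : Vᵀ * V = 1)
    (hSdiag : ∀ (i : Fin p) (j : Fin m), (i : ℕ) ≠ (j : ℕ) → S i j = 0)
    (hSnn : ∀ (i : Fin p) (j : Fin m), 0 ≤ S i j)
    (hX : X = U * S * Vᵀ)
    (W : Matrix (Fin p) (Fin m) ℝ)
    (hW : W = U * (Matrix.of fun i j => max (S i j - lam / 2) 0) * Vᵀ) :
    (∀ Z : Matrix (Fin p) (Fin m) ℝ,
        frobNormSq (W - X) + lam * nuclearNorm W ≤
          frobNormSq (Z - X) + lam * nuclearNorm Z) ∧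
    (∀ Z : Matrix (Fin p) (Fin m) ℝ,
        (∀ Y : Matrix (Fin p) (Fin m) ℝ,
          frobNormSq (Z - X) + lam * nuclearNorm Z ≤
            frobNormSq (Y - X) + lam * nuclearNorm Y) → Z = W) := by
  have hUU : U * Uᵀ = 1 := mul_eq_one_comm.mp hU
  have hVV : V * Vᵀ = 1 := mul_eq_one_comm.mp hV
  set W0 : Matrix (Fin p) (Fin m) ℝ := Matrix.of fun i j => max (S i j - lam / 2) 0 with hW0def
  have key : ∀ Z : Matrix (Fin p) (Fin m) ℝ,
      frobNormSq (W - X) + lam * nuclearNorm W + frobNormSq (Z - W) ≤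
        frobNormSq (Z - X) + lam * nuclearNorm Z := by
    intro Z
    set A := Uᵀ * Z * V with hAdef
    have hZ : Z = U * A * Vᵀ := by
      rw [hAdef]
      simp only [Matrix.mul_assoc]
      rw [hVV, Matrix.mul_one, ← Matrix.mul_assoc, hUU, Matrix.one_mul]
    have e1 : Z - X = U * (A - S) * Vᵀ := by
      rw [Matrix.mul_sub, Matrix.sub_mul, ← hZ, ← hX]
    have e2 : Z - W = U * (A - W0) * Vᵀ := by
      rw [Matrix.mul_sub, Matrix.sub_mul, ← hZ, ← hW]
    have e3 : W - X = U * (W0 - S) * Vᵀ := by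
      rw [Matrix.mul_sub, Matrix.sub_mul, ← hW, ← hX]
    rw [e1, e2, e3, hW, hZ, frobNormSq_conj _ U V hU hV, frobNormSq_conj _ U V hU hV,
      frobNormSq_conj _ U V hU hV, nuclearNorm_conj _ U V hU hV, nuclearNorm_conj _ U V hU hV]
    exact diag_case lam hlam S hSdiag hSnn A
  have fns_nonneg : ∀ A : Matrix (Fin p) (Fin m) ℝ, 0 ≤ frobNormSq A := by
    intro A
    exact Finset.sum_nonneg fun i _ => Finset.sum_nonneg fun j _ => sq_nonneg _
  constructor
  · intro Z
    have h1 := key Z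
    have h2 := fns_nonneg (Z - W)
    linarith
  · intro Z hZmin
    have h1 := hZmin W
    have h2 := key Z
    have h3 : frobNormSq (Z - W) = 0 := by
      have := fns_nonneg (Z - W)
      linarith
    have h4 : Z - W = 0 := by
      ext i j
      have hrow : ∀ i ∈ Finset.univ, (0 : ℝ) ≤ ∑ j : Fin m, ((Z - W) i j) ^ 2 :=
        fun i _ => Finset.sum_nonneg fun j _ => sq_nonneg _
      have h5 : ∑ j : Fin m, ((Z - W) i j) ^ 2 = 0 :=
        (Finset.sum_eq_zero_iff_of_nonneg hrow).mp h3 i (Finset.mem_univ i)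
      have h6 : ((Z - W) i j) ^ 2 = 0 :=
        (Finset.sum_eq_zero_iff_of_nonneg fun j _ => sq_nonneg _).mp h5 j (Finset.mem_univ j)
      have := pow_eq_zero_iff (n := 2) (by norm_num) |>.mp h6
      simpa using this
    have := sub_eq_zero.mp h4
    exact this
end

section
/- Let f : ℝ^d → ℝ be convex, differentiable, and H-smooth, and let the Frank–Wolfe iteration on a compact convex set C with diameter D (in the relevant norm) use step sizes γ_t = 2/(t+2): W^{(t+1)} = (1 − γ_t)·W^{(t)} + γ_t·Z^{(t)} where Z^{(t)} ∈ argmin_{Z ∈ C} ⟨∇f(W^{(t)}), Z⟩. Then f(W^{(t)}) − min_{W ∈ C} f(W) ≤ 2·H·D²/(t+2) for all t ≥ 1. -/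
open scoped RealInnerProductSpace

/-- Frank–Wolfe convergence with step sizes `γ_t = 2/(t+2)`: for a convex `H`-smooth
`f` on a compact convex set `C ⊆ ℝ^d` of diameter `D`,
`f(W^{(t)}) − min_{W ∈ C} f(W) ≤ 2HD²/(t+2)` for all `t ≥ 1`. -/
theorem frank_wolfe_convergence {d : ℕ} (H D : ℝ) (hH : 0 ≤ H)
    (f : EuclideanSpace ℝ (Fin d) → ℝ)
    (gradf : EuclideanSpace ℝ (Fin d) → EuclideanSpace ℝ (Fin d))
    (hconv : ∀ x y, f x + ⟪gradf x, y - x⟫ ≤ f y)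
    (hsmooth : ∀ x y, f y ≤ f x + ⟪gradf x, y - x⟫ + H / 2 * ‖y - x‖ ^ 2)
    (C : Set (EuclideanSpace ℝ (Fin d)))
    (hCcompact : IsCompact C) (hCconvex : Convex ℝ C)
    (hdiam : ∀ x ∈ C, ∀ y ∈ C, ‖x - y‖ ≤ D)
    (W Z : ℕ → EuclideanSpace ℝ (Fin d))
    (hW0 : W 0 ∈ C)
    (hZ : ∀ t, Z t ∈ C ∧ ∀ Y ∈ C, ⟪gradf (W t), Z t⟫ ≤ ⟪gradf (W t), Y⟫)
    (hiter : ∀ t : ℕ,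
      W (t + 1) = (1 - 2 / ((t : ℝ) + 2)) • W t + (2 / ((t : ℝ) + 2)) • Z t) :
    ∀ t : ℕ, 1 ≤ t → ∀ Wopt ∈ C, f (W t) - f Wopt ≤ 2 * H * D ^ 2 / ((t : ℝ) + 2) := by
  intro t ht Wopt hopt
  have hWC : ∀ s, W s ∈ C := by
    intro s
    induction s with
    | zero => exact hW0
    | succ n ih =>
      rw [hiter n]
      have h2 : (0:ℝ) < (n:ℝ) + 2 := by positivity
      refine hCconvex ih (hZ n).1 ?_ ?_ ?_
      · rw [sub_nonneg, div_le_one h2]; linarith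
      · positivity
      · ring
  have key : ∀ s : ℕ, f (W (s+1)) - f Wopt ≤
      (1 - 2/((s:ℝ)+2)) * (f (W s) - f Wopt) + H/2 * (2/((s:ℝ)+2))^2 * D^2 := by
    intro s
    set γ : ℝ := 2/((s:ℝ)+2) with hγdef
    have h2 : (0:ℝ) < (s:ℝ) + 2 := by positivity
    have hγ0 : 0 ≤ γ := by positivity
    have hdiff : W (s+1) - W s = γ • (Z s - W s) := by
      rw [hiter s, smul_sub]; module
    have hsm := hsmooth (W s) (W (s+1))
    rw [hdiff] at hsm
    have hinner : ⟪gradf (W s), γ • (Z s - W s)⟫ = γ * ⟪gradf (W s), Z s - W s⟫ :=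
      real_inner_smul_right _ _ _
    have hnorm : ‖γ • (Z s - W s)‖^2 = γ^2 * ‖Z s - W s‖^2 := by
      rw [norm_smul, mul_pow, Real.norm_eq_abs, sq_abs]
    have hZb : ⟪gradf (W s), Z s - W s⟫ ≤ f Wopt - f (W s) := by
      have h1 := (hZ s).2 Wopt hopt
      have h2' := hconv (W s) Wopt
      rw [inner_sub_right]
      rw [inner_sub_right] at h2'
      linarith
    have hnb : ‖Z s - W s‖^2 ≤ D^2 := by
      have h3 := hdiam (Z s) (hZ s).1 (W s) (hWC s)
      nlinarith [norm_nonneg (Z s - W s)]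
    rw [hinner, hnorm] at hsm
    nlinarith [mul_nonneg hH (sq_nonneg γ)]
  have main : ∀ s : ℕ, 1 ≤ s → f (W s) - f Wopt ≤ 2 * H * D^2 / ((s:ℝ)+2) := by
    intro s hs
    induction s with
    | zero => omega
    | succ n ih =>
      rcases Nat.lt_or_ge n 1 with h | hn
      · have hn0 : n = 0 := by omega
        subst hn0
        have hk := key 0
        norm_num at hk ⊢
        nlinarith [mul_nonneg hH (sq_nonneg D)]
      · have ihn := ih hn
        have hk := key n
        have h2 : (0:ℝ) < (n:ℝ) + 2 := by positivity
        have h3 : (0:ℝ) < (n:ℝ) + 3 := by positivity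
        have hfac : (0:ℝ) ≤ 1 - 2/((n:ℝ)+2) := by
          rw [sub_nonneg, div_le_one h2]; linarith
        have hE : 0 ≤ H * D^2 := mul_nonneg hH (sq_nonneg D)
        have step : f (W (n+1)) - f Wopt ≤
            (1 - 2/((n:ℝ)+2)) * (2*H*D^2/((n:ℝ)+2)) + H/2 * (2/((n:ℝ)+2))^2 * D^2 := by
          refine hk.trans ?_
          have := mul_le_mul_of_nonneg_left ihn hfac
          linarith
        have halg : (1 - 2/((n:ℝ)+2)) * (2*H*D^2/((n:ℝ)+2)) + H/2 * (2/((n:ℝ)+2))^2 * D^2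
            ≤ 2*H*D^2/((n:ℝ)+3) := by
          have lhs_eq : (1 - 2/((n:ℝ)+2)) * (2*H*D^2/((n:ℝ)+2)) + H/2 * (2/((n:ℝ)+2))^2 * D^2
              = 2*H*D^2*((n:ℝ)+1)/((n:ℝ)+2)^2 := by
            field_simp; ring
          rw [lhs_eq, div_le_div_iff₀ (by positivity) h3]
          nlinarith
        have hcast : ((n+1:ℕ):ℝ) + 2 = (n:ℝ) + 3 := by push_cast; ring
        rw [hcast]
        exact step.trans halg
  exact main t ht
end
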